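/- On a nondegenerate triangle F with barycentric coordinates λ_0, λ_1, λ_2, if a polynomial p of degree at most 1 satisfies ∫_F λ_1 λ_2 q p dS = 0 for all q ∈ P_1(F), then p = 0. -/

import Mathlib

open MeasureTheory

/-- On a nondegenerate triangle `F` with barycentric coordinates `λ₀, λ₁, λ₂`, if an
affine polynomial `p` satisfies `∫_F λ₁ λ₂ q p = 0` for all affine `q`, then `p = 0`
on `F`. -/
theorem affine_orthogonal_to_bubble_P1_on_triangle_is_zero
    (x0 x1 x2 : Fin 2 → ℝ) (hind : AffineIndependent ℝ ![x0, x1, x2])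
    (l1 l2 p : (Fin 2 → ℝ) →ᵃ[ℝ] ℝ)
    (hl1 : l1 x0 = 0 ∧ l1 x1 = 1 ∧ l1 x2 = 0)
    (hl2 : l2 x0 = 0 ∧ l2 x1 = 0 ∧ l2 x2 = 1)
    (horth : ∀ q : (Fin 2 → ℝ) →ᵃ[ℝ] ℝ,
      ∫ x in convexHull ℝ ({x0, x1, x2} : Set (Fin 2 → ℝ)),
        l1 x * l2 x * q x * p x = 0) :
    ∀ x ∈ convexHull ℝ ({x0, x1, x2} : Set (Fin 2 → ℝ)), p x = 0 := by
  classical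
  set s : Set (Fin 2 → ℝ) := convexHull ℝ ({x0, x1, x2} : Set (Fin 2 → ℝ)) with hs_def
  have htot : affineSpan ℝ (Set.range ![x0, x1, x2]) = ⊤ := by
    rw [hind.affineSpan_eq_top_iff_card_eq_finrank_add_one]; simp
  let b : AffineBasis (Fin 3) ℝ (Fin 2 → ℝ) := ⟨![x0, x1, x2], hind, htot⟩
  have hb0 : b 0 = x0 := rfl
  have hb1 : b 1 = x1 := rfl
  have hb2 : b 2 = x2 := rfl
  have hrange : Set.range ⇑b = ({x0, x1, x2} : Set (Fin 2 → ℝ)) := by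
    show Set.range ![x0, x1, x2] = _
    ext y
    simp [Matrix.range_cons, Matrix.range_empty]
    tauto
  have hs_eq : s = convexHull ℝ (Set.range ⇑b) := by rw [hrange]
  have heval : ∀ (f : (Fin 2 → ℝ) →ᵃ[ℝ] ℝ) (z),
      f z = b.coord 0 z * f x0 + b.coord 1 z * f x1 + b.coord 2 z * f x2 := by
    intro f z
    conv_lhs => rw [← b.affineCombination_coord_eq_self z]
    rw [Finset.map_affineCombination _ _ _ (b.sum_coord_apply_eq_one z),
      Finset.affineCombination_eq_linear_combination _ _ _ (b.sum_coord_apply_eq_one z)]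
    simp [Fin.sum_univ_three, hb0, hb1, hb2]
  have hco1 : ∀ z, l1 z = b.coord 1 z := by
    intro z; rw [heval l1 z, hl1.1, hl1.2.1, hl1.2.2]; ring
  have hco2 : ∀ z, l2 z = b.coord 2 z := by
    intro z; rw [heval l2 z, hl2.1, hl2.2.1, hl2.2.2]; ring
  -- nonnegativity on s
  have hnn : ∀ z ∈ s, ∀ i, 0 ≤ b.coord i z := by
    intro z hz i
    rw [hs_eq, b.convexHull_eq_nonneg_coord] at hz
    exact hz i
  have hint : interior s = {z | ∀ i, 0 < b.coord i z} := by
    rw [hs_eq, b.interior_convexHull]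
  -- compactness, convexity
  have hfin : ({x0, x1, x2} : Set (Fin 2 → ℝ)).Finite := by
    exact (Set.finite_singleton x2).insert x1 |>.insert x0
  have hcomp : IsCompact s := hfin.isCompact_convexHull ℝ
  have hconv : Convex ℝ s := convex_convexHull ℝ _
  -- the integrand
  set f : (Fin 2 → ℝ) → ℝ := fun z => l1 z * l2 z * p z * p z with hf_def
  have hfc : Continuous f := by
    have h1 := l1.continuous_of_finiteDimensional
    have h2 := l2.continuous_of_finiteDimensional
    have h3 := p.continuous_of_finiteDimensional
    fun_prop
  have hfi : IntegrableOn f s := hfc.continuousOn.integrableOn_compact hcomp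
  have hfnn : 0 ≤ᵐ[volume.restrict s] f := by
    refine ae_restrict_of_forall_mem hcomp.isClosed.measurableSet ?_
    intro z hz
    have : f z = (l1 z * l2 z) * (p z * p z) := by ring
    rw [this]
    exact mul_nonneg (mul_nonneg (by rw [hco1]; exact hnn z hz 1)
      (by rw [hco2]; exact hnn z hz 2)) (mul_self_nonneg _)
  have h0 : ∫ z in s, f z = 0 := horth p
  -- measure of support ∩ s is zero
  have hsupp : volume (Function.support f ∩ s) = 0 := by
    by_contra h
    have hpos : 0 < volume (Function.support f ∩ s) :=
      lt_of_le_of_ne zero_le (Ne.symm h)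
    have := (setIntegral_pos_iff_support_of_nonneg_ae hfnn hfi).mpr hpos
    rw [h0] at this
    exact lt_irrefl 0 this
  -- p = 0 on interior s
  have hp_int : ∀ z ∈ interior s, p z = 0 := by
    intro z hz
    by_contra hpz
    have hz' : ∀ i, 0 < b.coord i z := by rwa [hint] at hz
    have hfz : 0 < f z := by
      have : f z = (l1 z * l2 z) * (p z * p z) := by ring
      rw [this, hco1, hco2]
      exact mul_pos (mul_pos (hz' 1) (hz' 2))
        (mul_self_pos.mpr hpz)
    set U : Set (Fin 2 → ℝ) := interior s ∩ f ⁻¹' (Set.Ioi 0) with hU_def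
    have hUopen : IsOpen U := isOpen_interior.inter (isOpen_Ioi.preimage hfc)
    have hzU : z ∈ U := ⟨hz, hfz⟩
    have hUsub : U ⊆ Function.support f ∩ s := by
      rintro w ⟨hw1, hw2⟩
      exact ⟨ne_of_gt hw2, interior_subset hw1⟩
    have hUpos : 0 < volume U := hUopen.measure_pos volume ⟨z, hzU⟩
    have hU0 : volume U = 0 := measure_mono_null hUsub hsupp
    rw [hU0] at hUpos
    exact lt_irrefl 0 hUpos
  -- extend to all of s by continuity
  intro x hx
  obtain ⟨y, hy⟩ : (interior s).Nonempty := by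
    refine ⟨Finset.univ.centroid ℝ ⇑b, ?_⟩
    rw [hs_eq]
    exact b.centroid_mem_interior_convexHull
  set c : ℝ → (Fin 2 → ℝ) := fun t => (1 - t) • x + t • y with hc_def
  have hcc : Continuous c := by fun_prop
  have hc0 : c 0 = x := by simp [hc_def]
  have htend : Filter.Tendsto c (nhdsWithin 0 (Set.Ioi 0)) (nhds x) := by
    have := hcc.tendsto 0
    rw [hc0] at this
    exact this.mono_left nhdsWithin_le_nhds
  have hev : ∀ᶠ t in nhdsWithin 0 (Set.Ioi 0), p (c t) = 0 := by
    filter_upwards [Ioo_mem_nhdsGT_of_mem (Set.mem_Ico.mpr ⟨le_refl 0, zero_lt_one⟩)] with t ht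
    refine hp_int _ ?_
    exact hconv.combo_closure_interior_mem_interior (subset_closure hx) hy
      (by linarith [ht.2]) ht.1 (by ring)
  have hpc : Continuous (⇑p) := p.continuous_of_finiteDimensional
  have h1 : Filter.Tendsto (fun t => p (c t)) (nhdsWithin 0 (Set.Ioi 0)) (nhds (p x)) :=
    (hpc.tendsto x).comp htend
  have h2 : Filter.Tendsto (fun t => p (c t)) (nhdsWithin 0 (Set.Ioi 0)) (nhds 0) :=
    Filter.Tendsto.congr' (Filter.EventuallyEq.symm hev) tendsto_const_nhds
  exact tendsto_nhds_unique h1 h2
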